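/- arXiv:1907.01057 — 2 statements merged into one kernel-verified Lean document; each statement's English description precedes it below -/
import Mathlib

section
/- Define h = q·t·∏_{k≥1}(1-q^{11k}) · Σ_{n≥0} p(11n+6)qⁿ, where t = q^{-5}∏_{n≥1}((1-qⁿ)/(1-q^{11n}))^{12} and p is the partition function. Then the first terms of the Laurent expansion of h are h = 11q^{-4} + 165q^{-3} + 748q^{-2} + 1639q^{-1} + 3553 + O(q). -/
open PowerSeries

/-! ### Counting partitions -/

def pcAux : ℕ → ℕ → ℕ → ℕ
  | 0, _, _ => 0
  | _+1, _, 0 => 1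
  | _+1, 0, _+1 => 0
  | fuel+1, k+1, n+1 =>
      pcAux fuel k (n+1) + (if k ≤ n then pcAux fuel (k+1) (n - k) else 0)

def partCount (k n : ℕ) : ℕ := pcAux (k + n + 1) k n

lemma pcAux_eq (fuel fuel' k n : ℕ) (h : k + n < fuel) (h' : k + n < fuel') :
    pcAux fuel k n = pcAux fuel' k n := by
  induction fuel generalizing fuel' k n with
  | zero => omega
  | succ f ih =>
    cases fuel' with
    | zero => omega
    | succ f' =>
      match k, n with
      | k, 0 => cases k <;> rfl
      | 0, n+1 => rfl
      | k+1, n+1 =>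
        simp only [pcAux]
        rw [ih f' k (n+1) (by omega) (by omega)]
        by_cases hkn : k ≤ n
        · simp only [hkn, if_true]
          rw [ih f' (k+1) (n-k) (by omega) (by omega)]
        · simp [hkn]

lemma partCount_zero (k : ℕ) : partCount k 0 = 1 := by
  cases k <;> rfl
lemma partCount_zero_succ (n : ℕ) : partCount 0 (n+1) = 0 := rfl
lemma partCount_succ_succ (k n : ℕ) :
    partCount (k+1) (n+1) =
      partCount k (n+1) + (if k ≤ n then partCount (k+1) (n - k) else 0) := by
  simp only [partCount]
  show pcAux (k+1+(n+1)+1) (k+1) (n+1) = _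
  simp only [pcAux]
  rw [pcAux_eq (k+1+(n+1)) (k+(n+1)+1) k (n+1) (by omega) (by omega)]
  by_cases hkn : k ≤ n
  · simp only [hkn, if_true]
    rw [pcAux_eq (k+1+(n+1)) (k+1+(n-k)+1) (k+1) (n-k) (by omega) (by omega)]
  · simp [hkn]

open Finset in
lemma card_filter_partition_aux (m : ℕ) : ∀ (n k : ℕ), n + k ≤ m →
    ((univ : Finset (Nat.Partition n)).filter fun p => ∀ i ∈ p.parts, i ≤ k).card
      = partCount k n := by
  induction m with
  | zero =>
    intro n k h
    have hn : n = 0 := by omega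
    have hk : k = 0 := by omega
    subst hn; subst hk
    rw [partCount_zero]
    rw [Finset.filter_true_of_mem (fun p _ => by
      intro i hi; simp [Nat.Partition.partition_zero_parts] at hi)]
    simp
  | succ m IH =>
  intro n k hm
  match n, k with
  | 0, k =>
    rw [partCount_zero]
    rw [Finset.filter_true_of_mem (fun p _ => by
      intro i hi; simp [Nat.Partition.partition_zero_parts] at hi)]
    simp
  | n+1, 0 =>
    rw [partCount_zero_succ]
    rw [Finset.card_eq_zero, Finset.filter_eq_empty_iff]
    intro p _
    push_neg
    have hne : p.parts ≠ 0 := by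
      intro h
      have := p.parts_sum
      rw [h] at this
      simp at this
    obtain ⟨i, hi⟩ := Multiset.exists_mem_of_ne_zero hne
    exact ⟨i, hi, p.parts_pos hi⟩
  | n+1, k+1 =>
    rw [partCount_succ_succ, add_comm (partCount k (n+1))]
    rw [← Finset.card_filter_add_card_filter_not
      (s := (univ : Finset (Nat.Partition (n+1))).filter fun p => ∀ i ∈ p.parts, i ≤ k+1)
      (p := fun p => (k+1) ∈ p.parts)]
    congr 1
    · by_cases hkn : k ≤ n
      · simp only [hkn, if_true]
        rw [← IH (n-k) (k+1) (by omega)]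
        rw [Finset.filter_filter]
        apply Finset.card_bij'
          (i := fun p hp => (⟨p.parts.erase (k+1),
            fun {i} hi => p.parts_pos (Multiset.mem_of_mem_erase hi),
            by
              simp only [Finset.mem_filter] at hp
              have hmem := hp.2.2
              have hce := Multiset.cons_erase hmem
              have hs : ((k+1) ::ₘ p.parts.erase (k+1)).sum = n+1 := by
                rw [hce]; exact p.parts_sum
              rw [Multiset.sum_cons] at hs
              omega⟩ : Nat.Partition (n-k)))
          (j := fun q hq => (⟨(k+1) ::ₘ q.parts,
            fun {i} hi => by
              rcases Multiset.mem_cons.mp hi with h | h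
              · omega
              · exact q.parts_pos h,
            by rw [Multiset.sum_cons, q.parts_sum]; omega⟩ : Nat.Partition (n+1)))
        · intro p hp
          simp only [Finset.mem_filter] at hp
          apply Nat.Partition.ext
          exact Multiset.cons_erase hp.2.2
        · intro q hq
          apply Nat.Partition.ext
          exact Multiset.erase_cons_head _ _
        · intro p hp
          simp only [Finset.mem_filter, Finset.mem_univ, true_and] at hp ⊢
          exact fun i hi => hp.1 i (Multiset.mem_of_mem_erase hi)
        · intro q hq
          simp only [Finset.mem_filter, Finset.mem_univ, true_and] at hq ⊢
          constructor
          · intro i hi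
            rcases Multiset.mem_cons.mp hi with h | h
            · omega
            · exact hq i h
          · exact Multiset.mem_cons_self _ _
      · simp only [hkn, if_false]
        rw [Finset.card_eq_zero, Finset.filter_eq_empty_iff]
        intro p _
        intro hmem
        have h1 : (k+1) ≤ p.parts.sum := Multiset.le_sum_of_mem hmem
        rw [p.parts_sum] at h1
        omega
    · rw [← IH (n+1) k (by omega)]
      congr 1
      rw [Finset.filter_filter]
      apply Finset.filter_congr
      intro p _
      constructor
      · rintro ⟨h1, h2⟩ i hi
        have ha := h1 i hi
        have hb : i ≠ k+1 := fun h => h2 (h ▸ hi)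
        omega
      · intro h
        constructor
        · intro i hi; have := h i hi; omega
        · intro hmem; have := h _ hmem; omega

open Finset in
lemma card_partition (n : ℕ) :
    Fintype.card (Nat.Partition n) = partCount n n := by
  rw [← card_filter_partition_aux (n+n) n n le_rfl]
  rw [Finset.filter_true_of_mem, Finset.card_univ]
  intro p _ i hi
  have h1 : i ≤ p.parts.sum := Multiset.le_sum_of_mem hi
  rw [p.parts_sum] at h1
  exact h1

noncomputable section

/-- The formal infinite product `∏_{n≥1} F n` of power series, assuming each `F n` is
`1 + O(X^n)` so that the coefficient of `X^k` stabilizes: it is the coefficient of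
`X^k` in the finite partial product `∏_{n=1}^{k} F n`. -/
def formalProd (F : ℕ → PowerSeries ℚ) : PowerSeries ℚ :=
  PowerSeries.mk fun k => PowerSeries.coeff k (∏ n ∈ Finset.Icc 1 k, F n)

/-- `t = q^{-5} ∏_{n≥1}((1-qⁿ)/(1-q^{11n}))^{12}` as a formal Laurent series over `ℚ`. -/
def tSeries : LaurentSeries ℚ :=
  HahnSeries.single (-5 : ℤ) 1 *
    (HahnSeries.ofPowerSeries ℤ ℚ (formalProd fun n => (1 - X ^ n) ^ 12)) *
    (HahnSeries.ofPowerSeries ℤ ℚ (formalProd fun n => (1 - X ^ (11 * n)) ^ 12))⁻¹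

/-- The partition function `p(n)`: the number of partitions of `n`. -/
def partitionFun (n : ℕ) : ℚ := Fintype.card (Nat.Partition n)

/-- `h = q·t·∏_{k≥1}(1-q^{11k}) · Σ_{n≥0} p(11n+6) qⁿ` as a formal Laurent series. -/
def hSeries : LaurentSeries ℚ :=
  HahnSeries.single (1 : ℤ) 1 * tSeries *
    HahnSeries.ofPowerSeries ℤ ℚ (formalProd fun k => 1 - X ^ (11 * k)) *
    HahnSeries.ofPowerSeries ℤ ℚ (PowerSeries.mk fun n => partitionFun (11 * n + 6))

/-! ### Congruence machinery mod `X^5` -/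

open Finset

lemma dvd_sub_mul {d a a' b b' : ℚ⟦X⟧} (ha : d ∣ a - a') (hb : d ∣ b - b') :
    d ∣ a * b - a' * b' := by
  have h : a * b - a' * b' = (a - a') * b + a' * (b - b') := by ring
  rw [h]
  exact dvd_add (ha.mul_right _) (hb.mul_left _)

lemma dvd_sub_trans {d a b c : ℚ⟦X⟧} (h1 : d ∣ a - b) (h2 : d ∣ b - c) : d ∣ a - c := by
  have h : a - c = (a - b) + (b - c) := by ring
  rw [h]; exact dvd_add h1 h2

lemma prod_sub_one_dvd {d : ℚ⟦X⟧} {s : Finset ℕ} {F : ℕ → ℚ⟦X⟧}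
    (h : ∀ n ∈ s, d ∣ F n - 1) : d ∣ (∏ n ∈ s, F n) - 1 := by
  induction s using Finset.cons_induction with
  | empty => simp
  | cons a s ha ih =>
    rw [Finset.prod_cons]
    have h1 : d ∣ F a - 1 := h a (Finset.mem_cons_self a s)
    have h2 : d ∣ (∏ n ∈ s, F n) - 1 := ih fun n hn => h n (Finset.mem_cons_of_mem hn)
    have := dvd_sub_mul h1 h2
    simpa using this

lemma coeff_eq_of_dvd {e : ℕ} {f g : ℚ⟦X⟧} (h : (X : ℚ⟦X⟧) ^ e ∣ f - g) {m : ℕ}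
    (hm : m < e) : coeff m f = coeff m g := by
  have := PowerSeries.X_pow_dvd_iff.mp h m hm
  rw [map_sub, sub_eq_zero] at this
  exact this

lemma factor_dvd (n : ℕ) (k : ℕ) (hk : k ≤ n) :
    (X : ℚ⟦X⟧) ^ k ∣ (1 - X ^ n) ^ 12 - 1 := by
  have h1 : (1 - X ^ n : ℚ⟦X⟧) - 1 ∣ (1 - X ^ n) ^ 12 - 1 ^ 12 :=
    sub_dvd_pow_sub_pow _ _ 12
  simp only [one_pow] at h1
  have h2 : (1 - X ^ n : ℚ⟦X⟧) - 1 = -(X ^ n) := by ring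
  rw [h2, neg_dvd] at h1
  exact dvd_trans (pow_dvd_pow _ hk) h1

lemma coeff_formalProd_eq (F : ℕ → ℚ⟦X⟧) (hF : ∀ n, 1 ≤ n → (X : ℚ⟦X⟧) ^ n ∣ F n - 1)
    (m N : ℕ) (h : m ≤ N) :
    coeff m (formalProd F) = coeff m (∏ n ∈ Icc 1 N, F n) := by
  rw [formalProd, coeff_mk]
  have hsplit : (∏ n ∈ Icc 1 N, F n) = (∏ n ∈ Icc 1 m, F n) * ∏ n ∈ Icc (m+1) N, F n := by
    have h1 : Icc (1:ℕ) m = Ico 1 (m+1) := by rw [Finset.Ico_add_one_right_eq_Icc]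
    have h2 : Icc (m+1) N = Ico (m+1) (N+1) := by rw [Finset.Ico_add_one_right_eq_Icc]
    have h3 : Icc (1:ℕ) N = Ico 1 (N+1) := by rw [Finset.Ico_add_one_right_eq_Icc]
    rw [h1, h2, h3, Finset.prod_Ico_consecutive _ (by omega) (by omega)]
  rw [hsplit]
  apply coeff_eq_of_dvd (e := m + 1) _ (Nat.lt_succ_self m)
  have hd : (X : ℚ⟦X⟧) ^ (m+1) ∣ (∏ n ∈ Icc (m+1) N, F n) - 1 := by
    apply prod_sub_one_dvd
    intro n hn
    rw [Finset.mem_Icc] at hn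
    exact dvd_trans (pow_dvd_pow _ hn.1) (hF n (by omega))
  have heq : (∏ n ∈ Icc 1 m, F n) - (∏ n ∈ Icc 1 m, F n) * ∏ n ∈ Icc (m+1) N, F n
      = (∏ n ∈ Icc 1 m, F n) * (1 - ∏ n ∈ Icc (m+1) N, F n) := by ring
  rw [heq]
  exact Dvd.dvd.mul_left ((dvd_sub_comm).mp hd) _

/-! ### The four power series -/

def Aps : ℚ⟦X⟧ := formalProd fun n => (1 - X ^ n) ^ 12
def Bps : ℚ⟦X⟧ := formalProd fun n => (1 - X ^ (11 * n)) ^ 12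
def Cps : ℚ⟦X⟧ := formalProd fun k => 1 - X ^ (11 * k)
def Dps : ℚ⟦X⟧ := PowerSeries.mk fun n => partitionFun (11 * n + 6)
def Qps : ℚ⟦X⟧ := 1 - 12 * X + 54 * X ^ 2 - 88 * X ^ 3 - 99 * X ^ 4

lemma hT1 : (X : ℚ⟦X⟧) ^ 5 ∣ (1 - X) ^ 12 - (1 - 12*X + 66*X^2 - 220*X^3 + 495*X^4) :=
  ⟨-792 + 924*X - 792*X^2 + 495*X^3 - 220*X^4 + 66*X^5 - 12*X^6 + X^7, by ring⟩
lemma hT2 : (X : ℚ⟦X⟧) ^ 5 ∣ (1 - X^2) ^ 12 - (1 - 12*X^2 + 66*X^4) :=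
  ⟨-220*X + 495*X^3 - 792*X^5 + 924*X^7 - 792*X^9 + 495*X^11 - 220*X^13 + 66*X^15
    - 12*X^17 + X^19, by ring⟩
lemma hT3 : (X : ℚ⟦X⟧) ^ 5 ∣ (1 - X^3) ^ 12 - (1 - 12*X^3) :=
  ⟨66*X - 220*X^4 + 495*X^7 - 792*X^10 + 924*X^13 - 792*X^16 + 495*X^19 - 220*X^22
    + 66*X^25 - 12*X^28 + X^31, by ring⟩
lemma hT4 : (X : ℚ⟦X⟧) ^ 5 ∣ (1 - X^4) ^ 12 - (1 - 12*X^4) :=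
  ⟨66*X^3 - 220*X^7 + 495*X^11 - 792*X^15 + 924*X^19 - 792*X^23 + 495*X^27 - 220*X^31
    + 66*X^35 - 12*X^39 + X^43, by ring⟩
lemma hT5 : (X : ℚ⟦X⟧) ^ 5 ∣
    (1 - 12*X + 66*X^2 - 220*X^3 + 495*X^4) * (1 - 12*X^2 + 66*X^4) * (1 - 12*X^3)
      * (1 - 12*X^4) - Qps :=
  ⟨1344 - 1320*X - 10692*X^2 + 11538*X^3 + 4608*X^4 + 182304*X^5 - 251064*X^6
    - 125928*X^7 - 228096*X^8 - 2090880*X^9 + 4704480*X^10, by rw [Qps]; ring⟩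

lemma prod4 (F : ℕ → ℚ⟦X⟧) : (∏ n ∈ Icc 1 4, F n) = F 1 * F 2 * F 3 * F 4 := by
  have h : Finset.Icc 1 4 = ({1, 2, 3, 4} : Finset ℕ) := rfl
  rw [h]
  simp [Finset.prod_insert, Finset.mem_insert]
  ring

lemma hAcoeff (m : ℕ) (hm : m < 5) : coeff m Aps = coeff m Qps := by
  have h0 : coeff m Aps = coeff m (∏ n ∈ Icc 1 4, (1 - X ^ n : ℚ⟦X⟧) ^ 12) :=
    coeff_formalProd_eq _ (fun n hn => factor_dvd n n le_rfl) m 4 (by omega)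
  rw [h0, prod4, pow_one]
  apply coeff_eq_of_dvd (e := 5) _ hm
  exact dvd_sub_trans (dvd_sub_mul (dvd_sub_mul (dvd_sub_mul hT1 hT2) hT3) hT4) hT5

lemma hBcoeff (m : ℕ) (hm : m < 5) : coeff m Bps = coeff m 1 := by
  have h0 : coeff m Bps = coeff m (∏ n ∈ Icc 1 m, ((1:ℚ⟦X⟧) - X ^ (11*n)) ^ 12) :=
    coeff_formalProd_eq _ (fun n hn => factor_dvd (11*n) n (by omega)) m m le_rfl
  rw [h0]
  apply coeff_eq_of_dvd (e := 5) _ hm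
  apply prod_sub_one_dvd
  intro n hn
  rw [Finset.mem_Icc] at hn
  exact factor_dvd (11*n) 5 (by omega)

lemma hCcoeff (m : ℕ) (hm : m < 5) : coeff m Cps = coeff m 1 := by
  have hf : ∀ n : ℕ, 1 ≤ n → (X : ℚ⟦X⟧) ^ n ∣ (1 - X ^ (11*n)) - 1 := by
    intro n hn
    have h : (1 - X ^ (11*n) : ℚ⟦X⟧) - 1 = -(X ^ (11*n)) := by ring
    rw [h, dvd_neg]
    exact pow_dvd_pow _ (by omega)
  have h0 : coeff m Cps = coeff m (∏ n ∈ Icc 1 m, ((1:ℚ⟦X⟧) - X ^ (11*n))) :=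
    coeff_formalProd_eq _ hf m m le_rfl
  rw [h0]
  apply coeff_eq_of_dvd (e := 5) _ hm
  apply prod_sub_one_dvd
  intro n hn
  rw [Finset.mem_Icc] at hn
  have h : (1 - X ^ (11*n) : ℚ⟦X⟧) - 1 = -(X ^ (11*n)) := by ring
  rw [h, dvd_neg]
  exact pow_dvd_pow _ (by omega)

lemma hA : (X : ℚ⟦X⟧) ^ 5 ∣ Aps - Qps := by
  rw [PowerSeries.X_pow_dvd_iff]
  intro m hm
  rw [map_sub, hAcoeff m hm, sub_self]

lemma hB : (X : ℚ⟦X⟧) ^ 5 ∣ Bps - 1 := by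
  rw [PowerSeries.X_pow_dvd_iff]
  intro m hm
  rw [map_sub, hBcoeff m hm, sub_self]

lemma hC : (X : ℚ⟦X⟧) ^ 5 ∣ Cps - 1 := by
  rw [PowerSeries.X_pow_dvd_iff]
  intro m hm
  rw [map_sub, hCcoeff m hm, sub_self]

lemma constB : constantCoeff Bps = 1 := by
  have h : constantCoeff Bps = coeff 0 Bps := by
    rw [coeff_zero_eq_constantCoeff]
  rw [h, hBcoeff 0 (by omega), coeff_zero_eq_constantCoeff, map_one]

lemma hBinv : (X : ℚ⟦X⟧) ^ 5 ∣ Bps⁻¹ - 1 := by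
  have hmul : Bps⁻¹ * Bps = 1 := PowerSeries.inv_mul_cancel _ (by rw [constB]; norm_num)
  have h : Bps⁻¹ - 1 = (1 - Bps) * Bps⁻¹ := by
    calc Bps⁻¹ - 1 = Bps⁻¹ * 1 - Bps⁻¹ * Bps := by rw [hmul, mul_one]
    _ = (1 - Bps) * Bps⁻¹ := by ring
  rw [h]
  exact ((dvd_sub_comm).mp hB).mul_right _

/-! ### Coefficients of the product -/

lemma hP : (X : ℚ⟦X⟧) ^ 5 ∣ Aps * Bps⁻¹ * Cps * Dps - Qps * Dps := by
  have hD : (X : ℚ⟦X⟧) ^ 5 ∣ Dps - Dps := by rw [sub_self]; exact dvd_zero _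
  have h := dvd_sub_mul (dvd_sub_mul (dvd_sub_mul hA hBinv) hC) hD
  have he : Qps * 1 * 1 * Dps = Qps * Dps := by ring
  rwa [he] at h

set_option maxRecDepth 20000 in
lemma pf_vals : partitionFun 6 = 11 ∧ partitionFun 17 = 297 ∧ partitionFun 28 = 3718 ∧
    partitionFun 39 = 31185 ∧ partitionFun 50 = 204226 := by
  refine ⟨?_, ?_, ?_, ?_, ?_⟩ <;>
  · rw [partitionFun, card_partition]
    norm_num [show partCount 6 6 = 11 from by decide, show partCount 17 17 = 297 from by decide,
      show partCount 28 28 = 3718 from by decide, show partCount 39 39 = 31185 from by decide,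
      show partCount 50 50 = 204226 from by decide]

lemma coeffD (n : ℕ) : coeff n Dps = partitionFun (11 * n + 6) := coeff_mk _ _

lemma hQD : Qps * Dps = PowerSeries.C (R := ℚ) 1 * Dps - PowerSeries.C (R := ℚ) 12 * (X^1 * Dps)
    + PowerSeries.C (R := ℚ) 54 * (X^2 * Dps) - PowerSeries.C (R := ℚ) 88 * (X^3 * Dps)
    - PowerSeries.C (R := ℚ) 99 * (X^4 * Dps) := by
  rw [Qps]
  simp only [map_ofNat, map_one]
  ring

lemma coeffQD (m : ℕ) (hm : m < 5) :
    coeff m (Aps * Bps⁻¹ * Cps * Dps) = coeff m (Qps * Dps) :=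
  coeff_eq_of_dvd hP hm

end

noncomputable section
open Finset

lemma coeffQD_val (m : ℕ) (hm : m < 5) :
    coeff m (Qps * Dps) =
      partitionFun (11*m+6)
      - 12 * (if 1 ≤ m then partitionFun (11*(m-1)+6) else 0)
      + 54 * (if 2 ≤ m then partitionFun (11*(m-2)+6) else 0)
      - 88 * (if 3 ≤ m then partitionFun (11*(m-3)+6) else 0)
      - 99 * (if 4 ≤ m then partitionFun (11*(m-4)+6) else 0) := by
  rw [hQD]
  simp only [map_sub, map_add, PowerSeries.coeff_C_mul, PowerSeries.coeff_X_pow_mul',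
    one_mul]
  simp only [coeffD]

lemma coeff_main (m : ℕ) (hm : m < 5) :
    coeff m (Aps * Bps⁻¹ * Cps * Dps) = [11, 165, 748, 1639, 3553].getD m 0 := by
  rw [coeffQD m hm, coeffQD_val m hm]
  obtain ⟨p6, p17, p28, p39, p50⟩ := pf_vals
  interval_cases m <;> simp_all <;> norm_num

/-! ### Laurent series assembly -/

lemma hinv : (HahnSeries.ofPowerSeries ℤ ℚ Bps)⁻¹ = HahnSeries.ofPowerSeries ℤ ℚ Bps⁻¹ := by
  apply inv_eq_of_mul_eq_one_right
  rw [← map_mul, PowerSeries.mul_inv_cancel _ (by rw [constB]; norm_num), map_one]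

lemma hkey : hSeries = HahnSeries.single (-4 : ℤ) 1 *
    HahnSeries.ofPowerSeries ℤ ℚ (Aps * Bps⁻¹ * Cps * Dps) := by
  rw [hSeries, tSeries]
  rw [show (formalProd fun n => (1 - X ^ n) ^ 12 : ℚ⟦X⟧) = Aps from rfl,
    show (formalProd fun n => (1 - X ^ (11*n)) ^ 12 : ℚ⟦X⟧) = Bps from rfl,
    show (formalProd fun k => 1 - X ^ (11*k) : ℚ⟦X⟧) = Cps from rfl,
    show (PowerSeries.mk fun n => partitionFun (11*n+6)) = Dps from rfl, hinv]
  rw [map_mul, map_mul, map_mul]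
  rw [show (HahnSeries.single (-4:ℤ) (1:ℚ)) =
    HahnSeries.single (1:ℤ) 1 * HahnSeries.single (-5:ℤ) 1 from by
      rw [HahnSeries.single_mul_single]; norm_num]
  ring

lemma hSeries_coeff_nat (n : ℕ) :
    hSeries.coeff ((n : ℤ) - 4) = coeff n (Aps * Bps⁻¹ * Cps * Dps) := by
  rw [hkey]
  rw [show ((n : ℤ) - 4) = (n : ℤ) + (-4) from by ring]
  rw [HahnSeries.coeff_single_mul_add, one_mul, HahnSeries.ofPowerSeries_apply_coeff]

lemma hSeries_coeff_neg (k : ℤ) (hk : k < -4) : hSeries.coeff k = 0 := by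
  rw [hkey]
  rw [show k = (k + 4) + (-4) from by ring]
  rw [HahnSeries.coeff_single_mul_add, one_mul]
  rw [HahnSeries.ofPowerSeries_apply, HahnSeries.embDomain_notin_range]
  rintro ⟨m, hm⟩
  simp only [Nat.castOrderEmbedding_apply] at hm
  omega

/-- `h = 11q^{-4} + 165q^{-3} + 748q^{-2} + 1639q^{-1} + 3553 + O(q)`. -/
theorem hSeries_expansion :
    hSeries.coeff (-4) = 11 ∧ hSeries.coeff (-3) = 165 ∧ hSeries.coeff (-2) = 748 ∧
      hSeries.coeff (-1) = 1639 ∧ hSeries.coeff 0 = 3553 ∧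
      ∀ k : ℤ, k < -4 → hSeries.coeff k = 0 := by
  have h0 := hSeries_coeff_nat 0
  have h1 := hSeries_coeff_nat 1
  have h2 := hSeries_coeff_nat 2
  have h3 := hSeries_coeff_nat 3
  have h4 := hSeries_coeff_nat 4
  rw [coeff_main 0 (by norm_num)] at h0
  rw [coeff_main 1 (by norm_num)] at h1
  rw [coeff_main 2 (by norm_num)] at h2
  rw [coeff_main 3 (by norm_num)] at h3
  rw [coeff_main 4 (by norm_num)] at h4
  norm_num at h0 h1 h2 h3 h4
  exact ⟨h0, h1, h2, h3, h4, hSeries_coeff_neg⟩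

end
end

section
/- Let K be an algebraic function field over ℂ(x), let O_K be the integral closure of ℂ[x] in K, and let O_∞ be the integral closure in K of the ring R_∞ of rational functions with no pole at x = ∞. If β ∈ O_K is nonzero and β = c₁b₁ + ⋯ + c_nb_n with c_j ∈ ℂ[x], where b₁,…,b_n is a basis of O_K with associated integers d₁,…,d_n such that d_i is minimal with b_i ∈ x^{d_i}O_∞ and the leading vectors V₁,…,V_n (as in Trager's normalization) are linearly independent, then the minimal integer d with β ∈ x^d O_∞ equals max{deg(c_j) + d_j : c_j ≠ 0}. -/
set_option linter.unusedSectionVars false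
set_option linter.unusedVariables false


noncomputable section
open scoped Classical
open Polynomial

variable (K : Type*) [Field K] [Algebra (RatFunc ℂ) K] [Algebra (Polynomial ℂ) K]
  [IsScalarTower (Polynomial ℂ) (RatFunc ℂ) K] [Algebra ℂ K]
  [IsScalarTower ℂ (RatFunc ℂ) K] [FiniteDimensional (RatFunc ℂ) K]

/-- The ring `R_∞` of rational functions with no pole at `x = ∞`, i.e. the valuation
subring of the valuation at infinity on `ℂ(x)`. -/
def Rinf : Subring (RatFunc ℂ) := ((FunctionField.inftyValuation ℂ).valuationSubring).toSubring

instance : Algebra (Rinf) K :=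
  ((algebraMap (RatFunc ℂ) K).comp (SubringClass.subtype Rinf)).toAlgebra

/-- `O_K`: the integral closure of `ℂ[x]` in `K`. -/
def OK : Subalgebra (Polynomial ℂ) K := integralClosure (Polynomial ℂ) K

/-- `O_∞`: the integral closure of `R_∞` in `K`. -/
def Oinf : Subalgebra (Rinf) K := integralClosure (Rinf) K

/-- The element `x ∈ K`, the image of the variable of `ℂ(x)`. -/
def xK : K := algebraMap (RatFunc ℂ) K RatFunc.X

/-- `β ∈ x^e O_∞`. -/
def memXpowOinf (e : ℤ) (β : K) : Prop := ∃ γ ∈ Oinf K, β = xK K ^ e * γ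

lemma aux_xK_ne : xK K ≠ 0 := by
  have : Function.Injective (algebraMap (RatFunc ℂ) K) := (algebraMap (RatFunc ℂ) K).injective
  simp only [xK, ne_eq]
  intro h
  exact RatFunc.X_ne_zero (this (by simpa using h))

lemma aux_mem_Rinf (f : RatFunc ℂ) (hf : f.intDegree ≤ 0) : f ∈ Rinf := by
  change f ∈ (FunctionField.inftyValuation ℂ).valuationSubring
  rw [Valuation.mem_valuationSubring_iff]
  by_cases h0 : f = 0
  · rw [h0]; simp only [map_zero]; exact zero_le_one
  · change RatFunc.inftyValuationDef ℂ f ≤ 1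
    rw [RatFunc.inftyValuation_of_nonzero ℂ h0, WithZero.exp]
    rw [show (1 : (WithZero (Multiplicative ℤ))) = ((Multiplicative.ofAdd (0:ℤ) : Multiplicative ℤ) : (WithZero (Multiplicative ℤ))) by rfl]
    rw [WithZero.coe_le_coe, Multiplicative.ofAdd_le]
    exact hf

lemma aux_map_mem_Oinf (f : RatFunc ℂ) (hf : f.intDegree ≤ 0) :
    algebraMap (RatFunc ℂ) K f ∈ Oinf K := by
  have : algebraMap (RatFunc ℂ) K f = algebraMap (Rinf) K ⟨f, aux_mem_Rinf f hf⟩ := rfl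
  rw [this]
  exact isIntegral_algebraMap

lemma aux_xinv_mem : (xK K)⁻¹ ∈ Oinf K := by
  have : (xK K)⁻¹ = algebraMap (RatFunc ℂ) K (RatFunc.X)⁻¹ := by rw [map_inv₀]; rfl
  rw [this]
  apply aux_map_mem_Oinf
  have hX : (RatFunc.X : RatFunc ℂ) ≠ 0 := RatFunc.X_ne_zero
  have h1 : (RatFunc.X : RatFunc ℂ) * (RatFunc.X)⁻¹ = 1 := mul_inv_cancel₀ hX
  have := RatFunc.intDegree_mul hX (inv_ne_zero hX)
  rw [h1, RatFunc.intDegree_one, RatFunc.intDegree_X] at this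
  omega

lemma aux_xzpow_mem (k : ℤ) (hk : k ≤ 0) : xK K ^ k ∈ Oinf K := by
  have h : xK K ^ k = (xK K)⁻¹ ^ (-k).toNat := by
    rw [inv_pow, ← zpow_natCast, Int.toNat_of_nonneg (by omega), zpow_neg, inv_inv]
  rw [h]
  exact pow_mem (aux_xinv_mem K) _

lemma aux_intDegree_div (f : RatFunc ℂ) (hf : f ≠ 0) (g : RatFunc ℂ) (hg : g ≠ 0) :
    (f / g).intDegree = f.intDegree - g.intDegree := by
  have hfg : f / g ≠ 0 := div_ne_zero hf hg
  have h : f / g * g = f := div_mul_cancel₀ f hg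
  have := RatFunc.intDegree_mul hfg hg
  rw [h] at this
  omega

lemma aux_intDegree_Xpow (m : ℕ) : ((RatFunc.X : RatFunc ℂ) ^ m).intDegree = m := by
  rw [show ((RatFunc.X : RatFunc ℂ) ^ m) = algebraMap ℂ[X] (RatFunc ℂ) (Polynomial.X ^ m) by
    rw [map_pow, RatFunc.algebraMap_X]]
  rw [RatFunc.intDegree_polynomial, natDegree_X_pow]

lemma aux_poly (p : Polynomial ℂ) (hp : p ≠ 0) :
    ∃ γ ∈ Oinf K, algebraMap (Polynomial ℂ) K p = xK K ^ (p.natDegree : ℤ) * γ ∧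
      ∃ δ ∈ Oinf K, γ - algebraMap ℂ K p.leadingCoeff = (xK K)⁻¹ * δ := by
  set m := p.natDegree with hm
  have hX : (RatFunc.X : RatFunc ℂ) ≠ 0 := RatFunc.X_ne_zero
  have hXm : (RatFunc.X : RatFunc ℂ) ^ m ≠ 0 := pow_ne_zero _ hX
  set f : RatFunc ℂ := algebraMap ℂ[X] (RatFunc ℂ) p with hfdef
  have hf0 : f ≠ 0 := by
    rw [hfdef]
    exact fun hz => hp (IsFractionRing.injective ℂ[X] (RatFunc ℂ) (by simpa using hz))
  set g : RatFunc ℂ := f / RatFunc.X ^ m with hgdef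
  have hg0 : g ≠ 0 := div_ne_zero hf0 hXm
  have hgdeg : g.intDegree = 0 := by
    rw [hgdef, aux_intDegree_div _ hf0 _ hXm, RatFunc.intDegree_polynomial, aux_intDegree_Xpow]
    omega
  -- residue part in RatFunc
  set e : Polynomial ℂ := p.eraseLead with hedef
  set h : RatFunc ℂ := RatFunc.X * (algebraMap ℂ[X] (RatFunc ℂ) e / RatFunc.X ^ m) with hhdef
  have hfe : f = algebraMap ℂ[X] (RatFunc ℂ) e
      + RatFunc.C p.leadingCoeff * RatFunc.X ^ m := by
    rw [hfdef, hedef]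
    conv_lhs => rw [← p.eraseLead_add_C_mul_X_pow]
    rw [map_add, map_mul, map_pow, RatFunc.algebraMap_C, RatFunc.algebraMap_X]
  have hres : g - RatFunc.C p.leadingCoeff = (RatFunc.X)⁻¹ * h := by
    rw [hhdef, ← mul_assoc, inv_mul_cancel₀ hX, one_mul, hgdef, hfe, add_div,
      mul_div_assoc, div_self hXm, mul_one, add_sub_cancel_right]
  have hh_mem : h.intDegree ≤ 0 ∨ h = 0 := by
    by_cases he0 : e = 0
    · right; rw [hhdef, he0]; simp
    · left
      have hemap : algebraMap ℂ[X] (RatFunc ℂ) e ≠ 0 :=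
        fun hz => he0 (IsFractionRing.injective ℂ[X] (RatFunc ℂ) (by simpa using hz))
      have hlt : e.natDegree < m := by
        have := p.degree_eraseLead_lt hp
        have h2 := Polynomial.natDegree_lt_natDegree he0 this
        omega
      rw [hhdef, RatFunc.intDegree_mul hX (div_ne_zero hemap hXm), RatFunc.intDegree_X,
        aux_intDegree_div _ hemap _ hXm, RatFunc.intDegree_polynomial, aux_intDegree_Xpow]
      omega
  refine ⟨algebraMap (RatFunc ℂ) K g, aux_map_mem_Oinf K g (le_of_eq hgdeg), ?_, ?_⟩
  · have : algebraMap ℂ[X] K p = algebraMap (RatFunc ℂ) K f := by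
      rw [hfdef, IsScalarTower.algebraMap_apply ℂ[X] (RatFunc ℂ) K]
    rw [this, show f = RatFunc.X ^ m * g by rw [hgdef]; field_simp, map_mul, map_pow]
    rw [show (xK K) ^ (m : ℤ) = (xK K) ^ m from zpow_natCast _ m]
    rfl
  · refine ⟨algebraMap (RatFunc ℂ) K h, ?_, ?_⟩
    · rcases hh_mem with hd | h0
      · exact aux_map_mem_Oinf K h hd
      · rw [h0, map_zero]; exact zero_mem _
    · have hC : algebraMap ℂ K p.leadingCoeff
          = algebraMap (RatFunc ℂ) K (RatFunc.C p.leadingCoeff) := by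
        rw [IsScalarTower.algebraMap_apply ℂ (RatFunc ℂ) K, RatFunc.algebraMap_eq_C]
      rw [hC, ← map_sub, hres, map_mul, map_inv₀]
      rfl

lemma aux_zero (e : ℤ) : memXpowOinf K e 0 := ⟨0, zero_mem _, by rw [mul_zero]⟩

lemma aux_sub {e : ℤ} {β β' : K} (h : memXpowOinf K e β) (h' : memXpowOinf K e β') :
    memXpowOinf K e (β - β') := by
  obtain ⟨γ, hγ, rfl⟩ := h
  obtain ⟨γ', hγ', rfl⟩ := h'
  exact ⟨γ - γ', sub_mem hγ hγ', by ring⟩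

lemma aux_sum {e : ℤ} {n : ℕ} {f : Fin n → K} (h : ∀ i, memXpowOinf K e (f i)) :
    memXpowOinf K e (∑ i, f i) := by
  choose γ hγ hf using h
  exact ⟨∑ i, γ i, sum_mem fun i _ => hγ i, by
    rw [Finset.mul_sum]; exact Finset.sum_congr rfl fun i _ => hf i⟩

lemma aux_mono {e e' : ℤ} (h : e ≤ e') {β : K} (hβ : memXpowOinf K e β) :
    memXpowOinf K e' β := by
  obtain ⟨γ, hγ, rfl⟩ := hβ
  have hx := aux_xK_ne K
  refine ⟨xK K ^ (e - e') * γ, mul_mem (aux_xzpow_mem K _ (by omega)) hγ, ?_⟩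
  rw [← mul_assoc, ← zpow_add₀ hx]
  ring_nf

lemma aux_scale {e : ℤ} {β : K} (a : ℤ) (hβ : memXpowOinf K e β) :
    memXpowOinf K (e + a) (xK K ^ a * β) := by
  obtain ⟨γ, hγ, rfl⟩ := hβ
  exact ⟨γ, hγ, by rw [← mul_assoc, ← zpow_add₀ (aux_xK_ne K), add_comm]⟩

/-- Key property of a normalized (at infinity) integral basis: if `b₁,…,b_n` is a
basis of `O_K` over `ℂ[x]`, `d_i` is minimal with `b_i ∈ x^{d_i} O_∞`, and the residues
of `x^{-d_i} b_i` modulo `(1/x)O_∞` are `ℂ`-linearly independent, then for any nonzero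
`β = Σ c_j b_j` (`c_j ∈ ℂ[x]`), the minimal `d` with `β ∈ x^d O_∞` equals
`max { deg c_j + d_j : c_j ≠ 0 }`. -/
theorem normalized_basis_min_exponent
    (n : ℕ) (b : Fin n → K) (hbOK : ∀ i, b i ∈ OK K)
    (hbasis : ∀ β ∈ OK K, ∃! c : Fin n → Polynomial ℂ,
      β = ∑ i, algebraMap (Polynomial ℂ) K (c i) * b i)
    (d : Fin n → ℤ)
    (hmemd : ∀ i, memXpowOinf K (d i) (b i))
    (hmin : ∀ i, ∀ e : ℤ, memXpowOinf K e (b i) → d i ≤ e)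
    (hindep : ∀ c : Fin n → ℂ,
      (∃ γ ∈ Oinf K, (∑ i, c i • (xK K ^ (-(d i)) * b i)) = (xK K)⁻¹ * γ) → c = 0)
    (β : K) (hβOK : β ∈ OK K) (hβ0 : β ≠ 0)
    (c : Fin n → Polynomial ℂ)
    (hβ : β = ∑ i, algebraMap (Polynomial ℂ) K (c i) * b i)
    (D : ℤ)
    (hub : ∀ j, c j ≠ 0 → ((c j).natDegree : ℤ) + d j ≤ D)
    (hex : ∃ j, c j ≠ 0 ∧ ((c j).natDegree : ℤ) + d j = D) :
    IsLeast {e : ℤ | memXpowOinf K e β} D := by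
  have hx := aux_xK_ne K
  choose γb hγb hbd using hmemd
  have hbinv : ∀ i, xK K ^ (-(d i)) * b i = γb i := by
    intro i
    rw [hbd i, ← mul_assoc, ← zpow_add₀ hx, neg_add_cancel, zpow_zero, one_mul]
  -- each term is in x^{m_j + d_j} O_∞
  have hterm0 : ∀ j, c j ≠ 0 →
      memXpowOinf K (((c j).natDegree : ℤ) + d j) (algebraMap (Polynomial ℂ) K (c j) * b j) := by
    intro j h0
    obtain ⟨γp, hγp, hpe, -⟩ := aux_poly K (c j) h0
    refine ⟨γp * γb j, mul_mem hγp (hγb j), ?_⟩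
    rw [hpe, hbd j, zpow_add₀ hx]
    ring
  constructor
  · -- D is in the set
    show memXpowOinf K D β
    rw [hβ]
    apply aux_sum
    intro j
    by_cases h0 : c j = 0
    · rw [h0, map_zero, zero_mul]; exact aux_zero K D
    · exact aux_mono K (hub j h0) (hterm0 j h0)
  · -- D is a lower bound
    intro e he
    by_contra hlt
    push_neg at hlt
    set c' : Fin n → ℂ := fun j =>
      if c j ≠ 0 ∧ ((c j).natDegree : ℤ) + d j = D then (c j).leadingCoeff else 0 with hc'
    have hterm : ∀ j, memXpowOinf K (-1)
        (xK K ^ (-D) * (algebraMap (Polynomial ℂ) K (c j) * b j)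
          - c' j • (xK K ^ (-(d j)) * b j)) := by
      intro j
      by_cases h0 : c j = 0
      · have hcj : c' j = 0 := by rw [hc']; simp [h0]
        rw [hcj, h0, map_zero, zero_mul, mul_zero, zero_smul, sub_zero]
        exact aux_zero K (-1)
      · obtain ⟨γp, hγp, hpe, δ, hδ, hres⟩ := aux_poly K (c j) h0
        by_cases hD : ((c j).natDegree : ℤ) + d j = D
        · have hcj : c' j = (c j).leadingCoeff := by rw [hc']; simp [h0, hD]
          have h1 : xK K ^ (-D) * (algebraMap (Polynomial ℂ) K (c j) * b j) = γp * γb j := by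
            rw [hpe, hbd j,
              show xK K ^ (-D) * (xK K ^ ((c j).natDegree : ℤ) * γp * (xK K ^ (d j) * γb j))
                = xK K ^ (-D) * xK K ^ ((c j).natDegree : ℤ) * xK K ^ (d j) * (γp * γb j)
                by ring,
              ← zpow_add₀ hx, ← zpow_add₀ hx, show -D + ((c j).natDegree : ℤ) + d j = 0 by omega,
              zpow_zero, one_mul]
          have h2 : c' j • (xK K ^ (-(d j)) * b j)
              = algebraMap ℂ K ((c j).leadingCoeff) * γb j := by
            rw [hbinv j, hcj, Algebra.smul_def]
          rw [h1, h2, show γp * γb j - algebraMap ℂ K ((c j).leadingCoeff) * γb j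
              = (γp - algebraMap ℂ K ((c j).leadingCoeff)) * γb j by ring, hres]
          exact ⟨δ * γb j, mul_mem hδ (hγb j), by rw [zpow_neg_one]; ring⟩
        · have hcj : c' j = 0 := by rw [hc']; simp [hD]
          rw [hcj, zero_smul, sub_zero]
          have := aux_scale K (-D) (hterm0 j h0)
          exact aux_mono K (by have := hub j h0; omega) this
    have hbig : memXpowOinf K (-1) (xK K ^ (-D) * β) :=
      aux_mono K (by omega) (aux_scale K (-D) he)
    have hsum : memXpowOinf K (-1) (∑ j, c' j • (xK K ^ (-(d j)) * b j)) := by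
      have heq : ∑ j, c' j • (xK K ^ (-(d j)) * b j)
          = xK K ^ (-D) * β
            - ∑ j, (xK K ^ (-D) * (algebraMap (Polynomial ℂ) K (c j) * b j)
              - c' j • (xK K ^ (-(d j)) * b j)) := by
        rw [hβ, Finset.mul_sum, ← Finset.sum_sub_distrib]
        simp
      rw [heq]
      exact aux_sub K hbig (aux_sum K hterm)
    obtain ⟨γ, hγ, hγe⟩ := hsum
    have hz := hindep c' ⟨γ, hγ, by rw [hγe, zpow_neg_one]⟩
    obtain ⟨j, hj0, hjD⟩ := hex
    have hzj : c' j = 0 := congrFun hz j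
    rw [hc'] at hzj
    simp only [hj0, hjD, ne_eq, not_false_iff, and_self, if_true] at hzj
    exact hj0 (leadingCoeff_eq_zero.mp hzj)

end
end
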